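/- The function N(t) = N₀ t^(μ−1) E^{γ+1}_{ν,μ}(−c^ν t^ν) solves the fractional integral equation N(t) − N₀ t^(μ−1) E^γ_{ν,μ}(−c^ν t^ν) = −c^ν (₀D_t^(−ν) N)(t) for t > 0. -/

import Mathlib

open MeasureTheory Real Set intervalIntegral Filter


lemma beta_integrable {a b t : ℝ} (ha : 0 < a) (hb : 0 < b) (ht : 0 < t) :
    IntervalIntegrable (fun u : ℝ => u ^ (a - 1) * (t - u) ^ (b - 1)) volume 0 t := by
  have left : ∀ {p q : ℝ}, 0 < p → IntervalIntegrable
      (fun u : ℝ => u ^ (p - 1) * (t - u) ^ (q - 1)) volume 0 (t / 2) := by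
    intro p q hp
    apply IntervalIntegrable.mul_continuousOn (intervalIntegrable_rpow' (by linarith))
    intro u hu
    rw [uIcc_of_le (by linarith : (0:ℝ) ≤ t / 2)] at hu
    apply ContinuousAt.continuousWithinAt
    exact ((continuous_const.sub continuous_id).continuousAt).rpow_const
      (Or.inl (by intro h; simp only [Pi.sub_apply, id] at h; nlinarith [hu.2]))
  have right : IntervalIntegrable
      (fun u : ℝ => u ^ (a - 1) * (t - u) ^ (b - 1)) volume (t / 2) t := by
    have := ((left (q := a) hb).comp_sub_left t).symm
    simp only [sub_sub_cancel, sub_zero, sub_half] at this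
    apply this.congr
    intro x _
    exact mul_comm _ _
  exact (left ha).trans right

lemma beta_value {a b t : ℝ} (ha : 0 < a) (hb : 0 < b) (ht : 0 < t) :
    ∫ u in (0:ℝ)..t, u ^ (a - 1) * (t - u) ^ (b - 1)
      = Real.Gamma a * Real.Gamma b / Real.Gamma (a + b) * t ^ (a + b - 1) := by
  have hC : ∫ x in (0:ℝ)..t, (x : ℂ) ^ ((a:ℂ) - 1) * ((t : ℂ) - x) ^ ((b:ℂ) - 1)
      = (t : ℂ) ^ ((a:ℂ) + b - 1) * Complex.betaIntegral a b :=
    Complex.betaIntegral_scaled a b ht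
  have hG : Complex.Gamma (a + b) ≠ 0 := by
    rw [show (a:ℂ) + b = ((a+b:ℝ):ℂ) by push_cast; ring, Complex.Gamma_ofReal]
    exact_mod_cast (Real.Gamma_pos_of_pos (by linarith)).ne'
  have hbeta : Complex.betaIntegral a b
      = Complex.Gamma a * Complex.Gamma b / Complex.Gamma ((a:ℂ) + b) := by
    rw [eq_div_iff hG, mul_comm]
    exact (Complex.Gamma_mul_Gamma_eq_betaIntegral (by simpa using ha) (by simpa using hb)).symm
  have hre : (∫ x in (0:ℝ)..t, (x : ℂ) ^ ((a:ℂ) - 1) * ((t : ℂ) - x) ^ ((b:ℂ) - 1))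
      = ((∫ u in (0:ℝ)..t, u ^ (a - 1) * (t - u) ^ (b - 1) : ℝ) : ℂ) := by
    rw [← intervalIntegral.integral_ofReal]
    refine intervalIntegral.integral_congr fun x hx => ?_
    rw [uIcc_of_le ht.le] at hx
    rw [Complex.ofReal_mul, Complex.ofReal_cpow hx.1, Complex.ofReal_cpow (by linarith [hx.2])]
    push_cast; ring
  rw [hre, hbeta] at hC
  have : ((Real.Gamma a * Real.Gamma b / Real.Gamma (a + b) * t ^ (a + b - 1) : ℝ) : ℂ)
      = (t : ℂ) ^ ((a:ℂ) + b - 1) * (Complex.Gamma a * Complex.Gamma b / Complex.Gamma ((a:ℂ)+b)) := by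
    have e1 : Complex.Gamma ((a:ℂ) + b) = ((Real.Gamma (a+b) : ℝ) : ℂ) := by
      rw [show (a:ℂ) + b = ((a+b:ℝ):ℂ) by push_cast; ring, Complex.Gamma_ofReal]
    rw [Complex.ofReal_mul, Complex.ofReal_cpow ht.le, e1]
    push_cast [Complex.Gamma_ofReal]
    ring
  exact_mod_cast hC.trans this.symm


lemma gamma_ratio_large {ν : ℝ} (hν : 0 < ν) (M : ℝ) :
    ∀ᶠ (x : ℝ) in atTop, M * Real.Gamma x ≤ Real.Gamma (x + ν) := by
  set ν' := min ν 1 with hν'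
  have hν'0 : 0 < ν' := lt_min hν one_pos
  have hν'1 : ν' ≤ 1 := min_le_right _ _
  have hν'ν : ν' ≤ ν := min_le_left _ _
  set C := max 1 M with hC
  have hC1 : (1:ℝ) ≤ C := le_max_left _ _
  have hCpos : (0:ℝ) < C := lt_of_lt_of_le one_pos hC1
  rw [eventually_atTop]
  refine ⟨max 2 (C ^ (1/ν') + 1), fun x hx => ?_⟩
  have hx2 : 2 ≤ x := le_trans (le_max_left _ _) hx
  have hxC : C ^ (1/ν') + 1 ≤ x := le_trans (le_max_right _ _) hx
  set y := x + ν' - 1 with hy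
  have hyC : C ^ (1/ν') ≤ y := by simp only [hy]; linarith
  have hy1 : (1:ℝ) ≤ y :=
    le_trans (Real.one_le_rpow hC1 (by positivity)) hyC
  have hy0 : (0:ℝ) < y := lt_of_lt_of_le one_pos hy1
  -- M ≤ y ^ ν'
  have hMy : M ≤ y ^ ν' := by
    have h1 : C ^ ((1/ν') * ν') ≤ y ^ ν' := by
      rw [Real.rpow_mul hCpos.le]
      exact Real.rpow_le_rpow (by positivity) hyC hν'0.le
    rw [one_div_mul_cancel hν'0.ne', Real.rpow_one] at h1
    exact le_trans (le_max_right 1 M) h1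
  -- convexity: log Γ x ≤ (1-ν') log Γ (x+ν') + ν' log Γ y
  have hxpos : (0:ℝ) < x := by linarith
  have hconv := Real.convexOn_log_Gamma.2 (Set.mem_Ioi.mpr (by linarith : (0:ℝ) < x + ν'))
    (Set.mem_Ioi.mpr hy0) (by linarith : (0:ℝ) ≤ 1 - ν') hν'0.le (by ring)
  have hpt : (1 - ν') • (x + ν') + ν' • y = x := by
    simp only [smul_eq_mul, hy]; ring
  rw [hpt] at hconv
  simp only [Function.comp_apply, smul_eq_mul] at hconv
  -- Γ y = Γ (x + ν') / y
  have hGy : Real.Gamma (x + ν') = y * Real.Gamma y := by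
    have := Real.Gamma_add_one hy0.ne'
    rw [show y + 1 = x + ν' by simp only [hy]; ring] at this
    exact this
  have hGypos : 0 < Real.Gamma y := Real.Gamma_pos_of_pos hy0
  have hGxν : 0 < Real.Gamma (x + ν') := Real.Gamma_pos_of_pos (by linarith)
  have hGx : 0 < Real.Gamma x := Real.Gamma_pos_of_pos hxpos
  have hlogy : Real.log (Real.Gamma y) = Real.log (Real.Gamma (x + ν')) - Real.log y := by
    rw [hGy, Real.log_mul hy0.ne' hGypos.ne']; ring
  rw [hlogy] at hconv
  -- hconv : log Γ x ≤ log Γ(x+ν') - ν' * log y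
  have key : y ^ ν' * Real.Gamma x ≤ Real.Gamma (x + ν') := by
    rw [← Real.log_le_log_iff (by positivity) hGxν, Real.log_mul (by positivity) hGx.ne',
      Real.log_rpow hy0]
    nlinarith [hconv]
  have hmono : Real.Gamma (x + ν') ≤ Real.Gamma (x + ν) := by
    rcases eq_or_lt_of_le hν'ν with h | h
    · rw [h]
    · exact le_of_lt (Real.Gamma_strictMonoOn_Ici (by simp [Set.mem_Ici]; linarith)
        (by simp [Set.mem_Ici]; linarith) (by linarith))
  calc M * Real.Gamma x ≤ y ^ ν' * Real.Gamma x := by nlinarith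
    _ ≤ Real.Gamma (x + ν') := key
    _ ≤ Real.Gamma (x + ν) := hmono

lemma summable_master {ν : ℝ} (hν : 0 < ν) {p q : ℝ} (r : ℝ) (hp : 0 < p) (hq : 0 < q) :
    Summable (fun k : ℕ =>
      (ascPochhammer ℝ k).eval q * r ^ k / (k.factorial * Real.Gamma (p + k * ν))) := by
  set f : ℕ → ℝ := fun k =>
    (ascPochhammer ℝ k).eval q * r ^ k / (k.factorial * Real.Gamma (p + k * ν)) with hf
  have hGpos : ∀ k : ℕ, 0 < Real.Gamma (p + k * ν) := fun k =>
    Real.Gamma_pos_of_pos (by positivity)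
  have hnorm : ∀ k : ℕ, ‖f k‖ =
      (ascPochhammer ℝ k).eval q * |r| ^ k / (k.factorial * Real.Gamma (p + k * ν)) := by
    intro k
    rw [hf, Real.norm_eq_abs, abs_div, abs_mul, abs_pow,
      abs_of_pos (ascPochhammer_pos k q hq), abs_of_pos (by positivity : (0:ℝ) <
        (k.factorial : ℝ) * Real.Gamma (p + k * ν))]
  apply summable_of_ratio_norm_eventually_le (r := 1/2) (by norm_num)
  have htend : Tendsto (fun k : ℕ => p + k * ν) atTop atTop := by
    apply tendsto_atTop_add_const_left
    exact Tendsto.atTop_mul_const hν tendsto_natCast_atTop_atTop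
  filter_upwards [htend.eventually (gamma_ratio_large hν (2 * (q + 1) * |r|))] with k hk
  rw [hnorm, hnorm, ascPochhammer_succ_eval]
  have hBeq : p + (k + 1 : ℕ) * ν = (p + k * ν) + ν := by push_cast; ring
  rw [hBeq]
  set A := Real.Gamma (p + k * ν) with hA
  set B := Real.Gamma (p + k * ν + ν) with hB
  have hApos : 0 < A := hGpos k
  have hBpos : 0 < B := by
    rw [hB, show p + k * ν + ν = p + (k+1:ℕ) * ν by push_cast; ring]; exact hGpos (k+1)
  have hak : 0 < (ascPochhammer ℝ k).eval q := ascPochhammer_pos k q hq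
  rw [pow_succ, Nat.factorial_succ]
  push_cast
  rw [← mul_div_assoc, div_le_div_iff₀ (by positivity) (by positivity)]
  have hqk : (q + k) ≤ (q + 1) * (k + 1) := by nlinarith
  have hfk : (0:ℝ) < k.factorial := by positivity
  have habs : (0:ℝ) ≤ |r| := abs_nonneg r
  have hpow : (0:ℝ) ≤ |r| ^ k := by positivity
  have h1 := mul_le_mul_of_nonneg_left hk
    (by positivity : (0:ℝ) ≤ 1/2 * Polynomial.eval q (ascPochhammer ℝ k) * |r| ^ k * (↑k+1) * ↑k.factorial)
  have h2 := mul_le_mul_of_nonneg_right hqk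
    (by positivity : (0:ℝ) ≤ Polynomial.eval q (ascPochhammer ℝ k) * |r| ^ k * |r| * ↑k.factorial * A)
  nlinarith [h1, h2]

theorem prabhakar_solves_fractional_integral_equation
    (μ ν c γ N₀ : ℝ) (hμ : 0 < μ) (hν : 0 < ν) (hc : 0 < c) (hγ : 0 < γ)
    (N : ℝ → ℝ)
    (hN : ∀ t : ℝ, 0 < t →
      N t = N₀ * t ^ (μ - 1) *
        ∑' k : ℕ, (ascPochhammer ℝ k).eval (γ + 1) * (-(c ^ ν * t ^ ν)) ^ k /
          (k.factorial * Real.Gamma (μ + k * ν))) :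
    ∀ t : ℝ, 0 < t →
      N t - N₀ * t ^ (μ - 1) *
          (∑' k : ℕ, (ascPochhammer ℝ k).eval γ * (-(c ^ ν * t ^ ν)) ^ k /
            (k.factorial * Real.Gamma (μ + k * ν)))
        = -c ^ ν * ((1 / Real.Gamma ν) * ∫ u in (0 : ℝ)..t, (t - u) ^ (ν - 1) * N u) := by
  intro t ht
  -- abbreviations
  set A : ℕ → ℝ := fun k => (ascPochhammer ℝ k).eval (γ + 1) with hA
  set B : ℕ → ℝ := fun k => (ascPochhammer ℝ k).eval γ with hB
  have hGν : 0 < Real.Gamma ν := Real.Gamma_pos_of_pos hν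
  have hGk : ∀ k : ℕ, 0 < Real.Gamma (μ + k * ν) := fun k =>
    Real.Gamma_pos_of_pos (by positivity)
  have hApos : ∀ k, 0 < A k := fun k => ascPochhammer_pos k _ (by linarith)
  -- power manipulation
  have hpow : ∀ (x : ℝ), 0 < x → ∀ (k : ℕ),
      x ^ (μ - 1) * (-(c ^ ν * x ^ ν)) ^ k = (-c ^ ν) ^ k * x ^ (μ + k * ν - 1) := by
    intro x hx k
    rw [show -(c ^ ν * x ^ ν) = (-c ^ ν) * x ^ ν by ring, mul_pow,
      ← Real.rpow_natCast (x ^ ν) k, ← Real.rpow_mul hx.le,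
      ← mul_assoc, mul_comm (x ^ (μ - 1)), mul_assoc, ← Real.rpow_add hx]
    rw [show μ - 1 + ν * (k:ℝ) = μ + k * ν - 1 by ring]
  -- the termwise functions
  set g : ℕ → ℝ → ℝ := fun k u =>
    (N₀ * (A k * (-c ^ ν) ^ k / (k.factorial * Real.Gamma (μ + k * ν)))) *
      (u ^ (μ + k * ν - 1) * (t - u) ^ (ν - 1)) with hg
  -- pointwise expansion on Ioc 0 t
  have hpt : EqOn (fun u => (t - u) ^ (ν - 1) * N u) (fun u => ∑' k, g k u) (Ioc 0 t) := by
    intro u hu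
    simp only
    rw [hN u hu.1]
    rw [show (t - u) ^ (ν - 1) * (N₀ * u ^ (μ - 1) *
        ∑' k : ℕ, A k * (-(c ^ ν * u ^ ν)) ^ k / (k.factorial * Real.Gamma (μ + k * ν)))
      = ((t - u) ^ (ν - 1) * N₀) *
        ∑' k : ℕ, u ^ (μ - 1) * (A k * (-(c ^ ν * u ^ ν)) ^ k / (k.factorial * Real.Gamma (μ + k * ν)))
      from by rw [tsum_mul_left]; ring]
    rw [← tsum_mul_left]
    refine tsum_congr fun k => ?_
    have hk := hpow u hu.1 k
    simp only [hg]
    rw [show (t - u) ^ (ν - 1) * N₀ *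
        (u ^ (μ - 1) * (A k * (-(c ^ ν * u ^ ν)) ^ k / (↑k.factorial * Real.Gamma (μ + ↑k * ν))))
      = (N₀ * (A k / (↑k.factorial * Real.Gamma (μ + ↑k * ν)))) * (t - u) ^ (ν - 1) *
        (u ^ (μ - 1) * (-(c ^ ν * u ^ ν)) ^ k) from by ring, hk]
    ring
  -- second power helper
  have hpow2 : ∀ k : ℕ, t ^ (μ + (k:ℝ) * ν + ν - 1) = t ^ (μ + ν - 1) * (t ^ ν) ^ k := by
    intro k
    rw [← Real.rpow_natCast (t ^ ν) k, ← Real.rpow_mul ht.le, ← Real.rpow_add ht,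
      show μ + ν - 1 + ν * (k:ℝ) = μ + (k:ℝ) * ν + ν - 1 by ring]
  -- integrability of the beta integrands
  have hbint : ∀ k : ℕ, IntegrableOn
      (fun u => u ^ (μ + (k:ℝ) * ν - 1) * (t - u) ^ (ν - 1)) (Ioc 0 t) volume := by
    intro k
    rw [← intervalIntegrable_iff_integrableOn_Ioc_of_le ht.le]
    exact beta_integrable (by positivity) hν ht
  have hgmeas : ∀ k : ℕ, AEStronglyMeasurable (g k) (volume.restrict (Ioc 0 t)) := by
    intro k
    apply Measurable.aestronglyMeasurable
    simp only [hg]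
    fun_prop
  have hgint : ∀ k : ℕ, IntegrableOn (g k) (Ioc 0 t) volume := by
    intro k
    simp only [hg]
    exact (hbint k).const_mul _
  -- value of each integral
  have hval : ∀ k : ℕ, ∫ u in Ioc 0 t, g k u =
      (N₀ * (A k * (-c ^ ν) ^ k / (k.factorial * Real.Gamma (μ + k * ν)))) *
        (Real.Gamma (μ + (k:ℝ) * ν) * Real.Gamma ν / Real.Gamma (μ + (k:ℝ) * ν + ν) *
          t ^ (μ + (k:ℝ) * ν + ν - 1)) := by
    intro k
    simp only [hg]
    rw [MeasureTheory.integral_const_mul, ← intervalIntegral.integral_of_le ht.le,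
      beta_value (by positivity : (0:ℝ) < μ + (k:ℝ) * ν) hν ht]
  -- value of the norm integrals
  have hnormval : ∀ k : ℕ, ∫ u in Ioc 0 t, ‖g k u‖ =
      |N₀ * (A k * (-c ^ ν) ^ k / (k.factorial * Real.Gamma (μ + k * ν)))| *
        (Real.Gamma (μ + (k:ℝ) * ν) * Real.Gamma ν / Real.Gamma (μ + (k:ℝ) * ν + ν) *
          t ^ (μ + (k:ℝ) * ν + ν - 1)) := by
    intro k
    rw [setIntegral_congr_fun measurableSet_Ioc
      (show EqOn (fun u => ‖g k u‖)
        (fun u => |N₀ * (A k * (-c ^ ν) ^ k / (k.factorial * Real.Gamma (μ + k * ν)))| *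
          (u ^ (μ + (k:ℝ) * ν - 1) * (t - u) ^ (ν - 1))) (Ioc 0 t) from ?_)]
    · rw [MeasureTheory.integral_const_mul, ← intervalIntegral.integral_of_le ht.le,
        beta_value (by positivity : (0:ℝ) < μ + (k:ℝ) * ν) hν ht]
    · intro u hu
      simp only [hg, norm_mul, Real.norm_eq_abs]
      rw [abs_of_nonneg (Real.rpow_nonneg hu.1.le _),
        abs_of_nonneg (Real.rpow_nonneg (by linarith [hu.2] : (0:ℝ) ≤ t - u) _), abs_mul]
  -- summability of the norm integrals
  have hsummnorm : Summable (fun k => ∫ u in Ioc 0 t, ‖g k u‖) := by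
    have base := (summable_master hν (c ^ ν * t ^ ν)
      (by positivity : (0:ℝ) < μ + ν) (by linarith : (0:ℝ) < γ + 1)).mul_left
      (|N₀| * Real.Gamma ν * t ^ (μ + ν - 1))
    apply Summable.congr base
    intro k
    rw [hnormval k]
    have habs : |N₀ * (A k * (-c ^ ν) ^ k / (k.factorial * Real.Gamma (μ + k * ν)))|
        = |N₀| * (A k * (c ^ ν) ^ k / (k.factorial * Real.Gamma (μ + k * ν))) := by
      rw [abs_mul, abs_div, abs_mul, abs_pow, abs_neg,
        abs_of_nonneg (Real.rpow_nonneg hc.le ν), abs_of_pos (hApos k),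
        abs_of_pos (by positivity : (0:ℝ) < (k.factorial : ℝ) * Real.Gamma (μ + k * ν))]
    rw [habs, hpow2 k, show μ + ν + (k:ℝ) * ν = μ + (k:ℝ) * ν + ν by ring]
    have h1 : Real.Gamma (μ + (k:ℝ) * ν) ≠ 0 := (hGk k).ne'
    have h2 : Real.Gamma (μ + (k:ℝ) * ν + ν) ≠ 0 := by
      have : (0:ℝ) < μ + (k:ℝ) * ν + ν := by positivity
      exact (Real.Gamma_pos_of_pos this).ne'
    have h3 : ((k.factorial : ℝ)) ≠ 0 := by positivity
    field_simp
    ring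
  -- interchange of sum and integral
  have hkey : ∫ u in (0:ℝ)..t, (t - u) ^ (ν - 1) * N u = ∑' k, ∫ u in Ioc 0 t, g k u := by
    rw [intervalIntegral.integral_of_le ht.le, setIntegral_congr_fun measurableSet_Ioc hpt]
    refine MeasureTheory.integral_tsum hgmeas ?_
    have heq : ∀ k : ℕ, ∫⁻ u in Ioc 0 t, ‖g k u‖ₑ = ENNReal.ofReal (∫ u in Ioc 0 t, ‖g k u‖) :=
      fun k => (MeasureTheory.ofReal_integral_norm_eq_lintegral_enorm (hgint k)).symm
    rw [tsum_congr heq, ← ENNReal.ofReal_tsum_of_nonneg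
      (fun k => MeasureTheory.integral_nonneg fun u => norm_nonneg _) hsummnorm]
    exact ENNReal.ofReal_ne_top
  -- summability facts for the left-hand side
  have Sa := summable_master hν (-(c ^ ν * t ^ ν)) hμ (by linarith : (0:ℝ) < γ + 1)
  have Sb := summable_master hν (-(c ^ ν * t ^ ν)) hμ hγ
  set f : ℕ → ℝ := fun k =>
    N₀ * t ^ (μ - 1) * ((A k - B k) * (-(c ^ ν * t ^ ν)) ^ k /
      (k.factorial * Real.Gamma (μ + k * ν))) with hf
  have hfsumm : Summable f := by
    apply Summable.congr ((Sa.sub Sb).mul_left (N₀ * t ^ (μ - 1)))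
    intro k
    simp only [hf]
    ring
  have hL : N t - N₀ * t ^ (μ - 1) *
      (∑' k : ℕ, B k * (-(c ^ ν * t ^ ν)) ^ k / (k.factorial * Real.Gamma (μ + k * ν)))
      = ∑' k, f k := by
    rw [hN t ht, ← mul_sub, ← Summable.tsum_sub Sa Sb, ← tsum_mul_left]
    refine tsum_congr fun k => ?_
    simp only [hf]
    ring
  have hf0 : f 0 = 0 := by
    simp [hf, hA, hB]
  have hBsucc : ∀ k : ℕ, B (k + 1) = γ * A k := by
    intro k
    simp only [hA, hB, ascPochhammer_succ_left, Polynomial.eval_mul, Polynomial.eval_X,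
      Polynomial.eval_comp, Polynomial.eval_add, Polynomial.eval_one]
  have hAsucc : ∀ k : ℕ, A (k + 1) = A k * (γ + 1 + k) := by
    intro k
    simp only [hA, ascPochhammer_succ_eval]
  rw [hL, hkey, tsum_congr hval, ← tsum_mul_left, ← tsum_mul_left,
    Summable.tsum_eq_zero_add hfsumm, hf0, zero_add]
  refine tsum_congr fun k => ?_
  simp only [hf]
  rw [hAsucc k, hBsucc k,
    show A k * (γ + 1 + (k:ℝ)) - γ * A k = A k * ((k:ℝ) + 1) by ring]
  have hXpow : t ^ (μ - 1) * (-(c ^ ν * t ^ ν)) ^ (k + 1)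
      = (-c ^ ν) ^ (k + 1) * t ^ (μ + ((k:ℕ) + 1 : ℕ) * ν - 1) := hpow t ht (k + 1)
  have hexp : μ + (((k:ℕ) + 1 : ℕ) : ℝ) * ν = μ + (k:ℝ) * ν + ν := by push_cast; ring
  have h1 : Real.Gamma (μ + (k:ℝ) * ν) ≠ 0 := (hGk k).ne'
  have h2 : Real.Gamma (μ + (k:ℝ) * ν + ν) ≠ 0 :=
    (Real.Gamma_pos_of_pos (by positivity : (0:ℝ) < μ + (k:ℝ) * ν + ν)).ne'
  have h3 : ((k.factorial : ℝ)) ≠ 0 := by positivity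
  have h4 : ((k:ℝ) + 1) ≠ 0 := by positivity
  rw [show N₀ * t ^ (μ - 1) * (A k * ((k:ℝ) + 1) * (-(c ^ ν * t ^ ν)) ^ (k + 1) /
        ((k+1).factorial * Real.Gamma (μ + ((k:ℕ) + 1 : ℕ) * ν)))
      = N₀ * (A k * ((k:ℝ) + 1)) * (t ^ (μ - 1) * (-(c ^ ν * t ^ ν)) ^ (k + 1)) /
        ((k+1).factorial * Real.Gamma (μ + ((k:ℕ) + 1 : ℕ) * ν)) from by ring,
    hXpow, hexp, Nat.factorial_succ]
  push_cast
  field_simp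
  ring
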